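/- Let β > 0 and f ∈ V¹_β(φ) with coefficient sequence c ∈ ℓ¹(ℤ). Then for every fixed ω ∈ ℝ, the function x ↦ |Gf(x,ω)|² belongs to the shift-invariant space V¹_{β/2}(φ), i.e. it equals Σ_{n∈ℤ} A_n φ(x − (β/2)n) with (A_n) ∈ ℓ¹(ℤ) satisfying ‖A‖_{ℓ¹} ≤ φ(ω)‖c‖²_{ℓ¹}. -/

import Mathlib

open MeasureTheory Complex

/-- The Gabor transform with Gaussian window `φ(t) = exp(-π t²)`. -/
noncomputable def gaborTransform (f : ℝ → ℂ) (x ω : ℝ) : ℂ :=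
  ∫ t : ℝ, f t * (Real.exp (-Real.pi * (t - x)^2) : ℂ) *
    Complex.exp (-2 * Real.pi * Complex.I * t * ω)

noncomputable def kap : ℝ := (Real.sqrt 2)⁻¹

noncomputable def Gau' (β ω x : ℝ) (k : ℤ) : ℂ :=
  ((kap * Real.exp (-(Real.pi/2)*(x-β*(k:ℝ))^2 - (Real.pi/2)*ω^2) : ℝ):ℂ) *
    cexp (((-Real.pi*(β*(k:ℝ)+x)*ω : ℝ):ℂ) * I)


lemma gauss_integrable (a x ω : ℝ) : Integrable (fun t : ℝ =>
    cexp (-(Real.pi:ℂ) * ((t:ℂ) - a)^2) * cexp (-(Real.pi:ℂ) * ((t:ℂ) - x)^2) *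
      cexp (-2*(Real.pi:ℂ)*I*t*ω)) := by
  have h := integrable_cexp_quadratic (b := (2*Real.pi : ℂ))
    (by simpa using Real.pi_pos) (2*Real.pi*(a+x) - 2*Real.pi*I*ω) (-(Real.pi:ℂ)*(a^2+x^2))
  refine h.congr (Filter.Eventually.of_forall fun t => ?_)
  dsimp only
  symm
  rw [← Complex.exp_add, ← Complex.exp_add]
  congr 1; ring

lemma gauss_norm (a x ω t : ℝ) :
    ‖cexp (-(Real.pi:ℂ) * ((t:ℂ) - a)^2) * cexp (-(Real.pi:ℂ) * ((t:ℂ) - x)^2) *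
      cexp (-2*(Real.pi:ℂ)*I*t*ω)‖
    = Real.exp (-Real.pi*(t-a)^2) * Real.exp (-Real.pi*(t-x)^2) := by
  have e1 : (-(Real.pi:ℂ)*((t:ℂ)-a)^2) = ((-Real.pi*(t-a)^2 : ℝ) : ℂ) := by push_cast; ring
  have e2 : (-(Real.pi:ℂ)*((t:ℂ)-x)^2) = ((-Real.pi*(t-x)^2 : ℝ) : ℂ) := by push_cast; ring
  have e3 : (-2*(Real.pi:ℂ)*I*t*ω) = ((-2*Real.pi*t*ω : ℝ) : ℂ) * I := by push_cast; ring
  rw [e1, e2, e3, ← Complex.ofReal_exp, ← Complex.ofReal_exp]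
  simp only [norm_mul, Complex.norm_real, Complex.norm_exp_ofReal_mul_I,
    mul_one, Real.norm_eq_abs, Real.abs_exp]

lemma gauss_integral (a x ω : ℝ) :
    ∫ t : ℝ, cexp (-(Real.pi:ℂ) * ((t:ℂ) - a)^2) * cexp (-(Real.pi:ℂ) * ((t:ℂ) - x)^2) *
      cexp (-2*(Real.pi:ℂ)*I*t*ω)
    = ((kap * Real.exp (-(Real.pi/2)*(x-a)^2 - (Real.pi/2)*ω^2) : ℝ) : ℂ) *
      cexp (((-Real.pi*(a+x)*ω : ℝ):ℂ) * I) := by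
  have hπ : (Real.pi : ℂ) ≠ 0 := Complex.ofReal_ne_zero.mpr Real.pi_ne_zero
  set b : ℂ := -(2*Real.pi) with hb
  set cc : ℂ := 2*Real.pi*(a+x) - 2*Real.pi*I*ω with hcc
  set d : ℂ := -(Real.pi:ℂ)*(a^2+x^2) with hd
  have hbre : b.re < 0 := by
    rw [hb]; simpa using Real.pi_pos
  have h1 : ∀ t : ℝ, cexp (-(Real.pi:ℂ) * ((t:ℂ) - a)^2) * cexp (-(Real.pi:ℂ) * ((t:ℂ) - x)^2) *
      cexp (-2*(Real.pi:ℂ)*I*t*ω) = cexp (b*t^2 + cc*t + d) := by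
    intro t
    rw [← Complex.exp_add, ← Complex.exp_add]
    congr 1
    rw [hb, hcc, hd]; ring
  calc ∫ t : ℝ, cexp (-(Real.pi:ℂ) * ((t:ℂ) - a)^2) * cexp (-(Real.pi:ℂ) * ((t:ℂ) - x)^2) *
      cexp (-2*(Real.pi:ℂ)*I*t*ω) = ∫ t : ℝ, cexp (b*t^2 + cc*t + d) := by simp only [h1]
    _ = ((Real.pi:ℂ) / -b) ^ (1/2 : ℂ) * cexp (d - cc^2 / (4*b)) := integral_cexp_quadratic hbre cc d
    _ = _ := by
        have h2 : (Real.pi:ℂ) / -b = ((1/2 : ℝ) : ℂ) := by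
          rw [hb]; push_cast; rw [neg_neg, div_eq_iff (by simp [hπ] : (2:ℂ)*Real.pi ≠ 0)]; ring
        have h3 : ((1/2:ℝ):ℂ) ^ (1/2 : ℂ) = (kap : ℂ) := by
          rw [show (1/2 : ℂ) = ((1/2 : ℝ):ℂ) by norm_num, ← Complex.ofReal_cpow (by norm_num)]
          rw [← Real.sqrt_eq_rpow, show (1/2:ℝ) = 2⁻¹ by norm_num, Real.sqrt_inv, kap]
        have h4 : d - cc^2 / (4*b) =
            ((-(Real.pi/2)*(x-a)^2 - (Real.pi/2)*ω^2 : ℝ) : ℂ) + ((-Real.pi*(a+x)*ω : ℝ):ℂ) * I := by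
          rw [hb, hcc, hd]
          have hI : (I:ℂ)^2 = -1 := Complex.I_sq
          push_cast
          field_simp
          ring_nf
          linear_combination (4*(ω:ℂ)^2) * hI
        rw [h2, h3, h4, Complex.exp_add, ← Complex.ofReal_exp, ← mul_assoc, ← Complex.ofReal_mul]

lemma kap_nonneg : 0 ≤ kap := by rw [kap]; positivity

lemma kap_mul_self : kap * kap = 1/2 := by
  rw [kap, ← mul_inv, Real.mul_self_sqrt (by norm_num)]; norm_num

lemma kap_le_one : kap ≤ 1 := by
  rw [kap]
  apply inv_le_one_of_one_le₀
  rw [show (1:ℝ) = Real.sqrt 1 by simp]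
  exact Real.sqrt_le_sqrt (by norm_num)

lemma norm_Gau' (β ω x : ℝ) (k : ℤ) :
    ‖Gau' β ω x k‖ = kap * Real.exp (-(Real.pi/2)*(x-β*(k:ℝ))^2 - (Real.pi/2)*ω^2) := by
  rw [Gau', norm_mul, Complex.norm_real, Real.norm_eq_abs,
    Complex.norm_exp_ofReal_mul_I, mul_one]
  exact abs_of_nonneg (mul_nonneg kap_nonneg (Real.exp_pos _).le)

lemma norm_Gau'_le_one (β ω x : ℝ) (k : ℤ) : ‖Gau' β ω x k‖ ≤ 1 := by
  rw [norm_Gau']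
  calc kap * Real.exp (-(Real.pi/2)*(x-β*(k:ℝ))^2 - (Real.pi/2)*ω^2) ≤ kap * 1 := by
        apply mul_le_mul_of_nonneg_left _ kap_nonneg
        apply Real.exp_le_one_iff.mpr
        have := Real.pi_pos
        nlinarith [sq_nonneg (x-β*(k:ℝ)), sq_nonneg ω]
    _ ≤ 1 := by simpa using kap_le_one

lemma conj_Gau' (β ω x : ℝ) (k : ℤ) :
    (starRingEnd ℂ) (Gau' β ω x k) =
    ((kap * Real.exp (-(Real.pi/2)*(x-β*(k:ℝ))^2 - (Real.pi/2)*ω^2) : ℝ):ℂ) *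
      cexp (((Real.pi*(β*(k:ℝ)+x)*ω : ℝ):ℂ) * I) := by
  rw [Gau', map_mul, Complex.conj_ofReal, ← Complex.exp_conj, map_mul, Complex.conj_ofReal,
    Complex.conj_I]
  congr 1
  push_cast
  ring

lemma point_id (β ω x : ℝ) (c : ℤ → ℂ) (n k : ℤ) :
    (c k * Gau' β ω x k) * (starRingEnd ℂ) (c (n-k) * Gau' β ω x (n-k)) =
    (c k * starRingEnd ℂ (c (n - k)) *
      ((1/2 : ℝ) * Real.exp (-(Real.pi * β^2 / 4) * (((n - k : ℤ) : ℝ) - k)^2) : ℝ) *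
      Complex.exp (Real.pi * Complex.I * β * ((((n - k : ℤ) : ℝ)) - k) * ω) *
      (Real.exp (-Real.pi * ω^2) : ℝ)) *
    (Real.exp (-Real.pi * (x - β/2 * n)^2) : ℝ) := by
  rw [map_mul, conj_Gau']
  have key1 : ((kap * Real.exp (-(Real.pi/2)*(x-β*(k:ℝ))^2 - (Real.pi/2)*ω^2) : ℝ):ℂ) *
      ((kap * Real.exp (-(Real.pi/2)*(x-β*((n-k : ℤ):ℝ))^2 - (Real.pi/2)*ω^2) : ℝ):ℂ) =
      (((1/2 : ℝ) * Real.exp (-(Real.pi * β^2 / 4) * (((n - k : ℤ) : ℝ) - k)^2) : ℝ):ℂ) *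
      ((Real.exp (-Real.pi * ω^2) : ℝ):ℂ) * ((Real.exp (-Real.pi * (x - β/2 * n)^2) : ℝ):ℂ) := by
    rw [← Complex.ofReal_mul, ← Complex.ofReal_mul, ← Complex.ofReal_mul]
    congr 1
    rw [show (kap * Real.exp (-(Real.pi/2)*(x-β*(k:ℝ))^2 - (Real.pi/2)*ω^2)) *
        (kap * Real.exp (-(Real.pi/2)*(x-β*((n-k : ℤ):ℝ))^2 - (Real.pi/2)*ω^2)) =
        (kap * kap) * Real.exp ((-(Real.pi/2)*(x-β*(k:ℝ))^2 - (Real.pi/2)*ω^2) +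
          (-(Real.pi/2)*(x-β*((n-k : ℤ):ℝ))^2 - (Real.pi/2)*ω^2)) from by rw [Real.exp_add]; ring,
      kap_mul_self]
    rw [show ((1/2 : ℝ) * Real.exp (-(Real.pi * β^2 / 4) * (((n - k : ℤ) : ℝ) - k)^2)) *
        Real.exp (-Real.pi * ω^2) * Real.exp (-Real.pi * (x - β/2 * n)^2) =
        (1/2) * Real.exp ((-(Real.pi * β^2 / 4) * (((n - k : ℤ) : ℝ) - k)^2) +
          (-Real.pi * ω^2) + (-Real.pi * (x - β/2 * n)^2)) from by
        rw [Real.exp_add, Real.exp_add]; ring]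
    congr 1
    push_cast
    ring
  have key2 : cexp (((-Real.pi*(β*(k:ℝ)+x)*ω : ℝ):ℂ) * I) *
      cexp (((Real.pi*(β*((n-k : ℤ):ℝ)+x)*ω : ℝ):ℂ) * I) =
      Complex.exp (Real.pi * Complex.I * β * ((((n - k : ℤ) : ℝ)) - k) * ω) := by
    rw [← Complex.exp_add]
    congr 1
    push_cast
    ring
  calc (c k * Gau' β ω x k) *
      ((starRingEnd ℂ) (c (n-k)) *
        (((kap * Real.exp (-(Real.pi/2)*(x-β*((n-k : ℤ):ℝ))^2 - (Real.pi/2)*ω^2) : ℝ):ℂ) *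
          cexp (((Real.pi*(β*((n-k : ℤ):ℝ)+x)*ω : ℝ):ℂ) * I)))
      = (c k * (starRingEnd ℂ) (c (n-k))) *
        ((((kap * Real.exp (-(Real.pi/2)*(x-β*(k:ℝ))^2 - (Real.pi/2)*ω^2) : ℝ):ℂ) *
          ((kap * Real.exp (-(Real.pi/2)*(x-β*((n-k : ℤ):ℝ))^2 - (Real.pi/2)*ω^2) : ℝ):ℂ)) *
         (cexp (((-Real.pi*(β*(k:ℝ)+x)*ω : ℝ):ℂ) * I) *
          cexp (((Real.pi*(β*((n-k : ℤ):ℝ)+x)*ω : ℝ):ℂ) * I))) := by rw [Gau']; ring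
    _ = _ := by rw [key1, key2]; ring

lemma gabor_repr (β : ℝ) (c : ℤ → ℂ) (hc : Summable fun k : ℤ => ‖c k‖) (f : ℝ → ℂ)
    (hf : ∀ t : ℝ, f t = ∑' k : ℤ, c k * (Real.exp (-Real.pi * (t - β*k)^2) : ℂ))
    (ω x : ℝ) :
    gaborTransform f x ω = ∑' k : ℤ, c k * Gau' β ω x k := by
  set F : ℤ → ℝ → ℂ := fun k t => c k *
    (cexp (-(Real.pi:ℂ) * ((t:ℂ) - ((β*(k:ℝ) : ℝ):ℂ))^2) * cexp (-(Real.pi:ℂ) * ((t:ℂ) - x)^2) *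
      cexp (-2*(Real.pi:ℂ)*I*t*ω)) with hF
  have hFint : ∀ k : ℤ, Integrable (F k) := fun k =>
    (gauss_integrable (β*(k:ℝ)) x ω).const_mul _
  have hg : Integrable (fun t : ℝ => Real.exp (-Real.pi * (t-x)^2)) :=
    (integrable_exp_neg_mul_sq Real.pi_pos).comp_sub_right x
  set C : ℝ := ∫ t : ℝ, Real.exp (-Real.pi * (t-x)^2) with hC
  have hnorm : ∀ (k : ℤ) (t : ℝ), ‖F k t‖ =
      ‖c k‖ * (Real.exp (-Real.pi*(t-β*(k:ℝ))^2) * Real.exp (-Real.pi*(t-x)^2)) := by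
    intro k t
    rw [hF]; simp only [norm_mul, gauss_norm (β*(k:ℝ)) x ω t]
  have hle : ∀ k : ℤ, (∫ t : ℝ, ‖F k t‖) ≤ ‖c k‖ * C := by
    intro k
    have h := integral_mono (hFint k).norm (hg.const_mul ‖c k‖) (fun t => by
      rw [hnorm k t]
      have h1 : Real.exp (-Real.pi*(t-β*(k:ℝ))^2) ≤ 1 :=
        Real.exp_le_one_iff.mpr (by nlinarith [sq_nonneg (t-β*(k:ℝ)), Real.pi_pos])
      have h2 : (0:ℝ) ≤ Real.exp (-Real.pi*(t-x)^2) := (Real.exp_pos _).le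
      exact mul_le_mul_of_nonneg_left (mul_le_of_le_one_left h2 h1) (norm_nonneg (c k)))
    rwa [integral_const_mul] at h
  have hsum : Summable fun k : ℤ => ∫ t : ℝ, ‖F k t‖ :=
    Summable.of_nonneg_of_le (fun k => integral_nonneg fun t => norm_nonneg _) hle
      (hc.mul_right C)
  have key := integral_tsum_of_summable_integral_norm hFint hsum
  have hpt : ∀ t : ℝ, f t * (Real.exp (-Real.pi * (t - x)^2) : ℂ) *
      Complex.exp (-2 * Real.pi * Complex.I * t * ω) = ∑' k : ℤ, F k t := by
    intro t
    rw [hf t, ← tsum_mul_right, ← tsum_mul_right]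
    refine tsum_congr fun k => ?_
    have E1 : ((Real.exp (-Real.pi * (t - β*(k:ℝ))^2) : ℝ) : ℂ) =
        cexp (-(Real.pi:ℂ) * ((t:ℂ) - ((β*(k:ℝ) : ℝ):ℂ))^2) := by
      rw [Complex.ofReal_exp]; congr 1; push_cast; ring
    have E2 : ((Real.exp (-Real.pi * (t - x)^2) : ℝ) : ℂ) =
        cexp (-(Real.pi:ℂ) * ((t:ℂ) - (x:ℂ))^2) := by
      rw [Complex.ofReal_exp]; congr 1; push_cast; ring
    rw [hF, E1, E2]
    ring
  calc gaborTransform f x ω = ∫ t : ℝ, ∑' k : ℤ, F k t := by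
        rw [gaborTransform]; exact integral_congr_ae (Filter.Eventually.of_forall hpt)
    _ = ∑' k : ℤ, ∫ t : ℝ, F k t := key.symm
    _ = ∑' k : ℤ, c k * Gau' β ω x k := by
        refine tsum_congr fun k => ?_
        rw [hF]
        dsimp only
        rw [integral_const_mul, gauss_integral (β*(k:ℝ)) x ω, Gau']

/-- The coefficients `A_n = Σ_{j+k=n} c_k conj(c_j) (1/2)e^{-(πβ²/4)(k-j)²}
e^{πiβ(j-k)ω} φ(ω)` of the expansion of `x ↦ |Gf(x,ω)|²` in `V¹_{β/2}(φ)`. -/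
noncomputable def specCoeff (β : ℝ) (c : ℤ → ℂ) (ω : ℝ) (n : ℤ) : ℂ :=
  ∑' k : ℤ, c k * starRingEnd ℂ (c (n - k)) *
    ((1/2 : ℝ) * Real.exp (-(Real.pi * β^2 / 4) * (((n - k : ℤ) : ℝ) - k)^2) : ℝ) *
    Complex.exp (Real.pi * Complex.I * β * ((((n - k : ℤ) : ℝ)) - k) * ω) *
    (Real.exp (-Real.pi * ω^2) : ℝ)

set_option maxHeartbeats 2000000 in
/-- For `f ∈ V¹_β(φ)` and fixed `ω`, the map `x ↦ |Gf(x,ω)|²` belongs to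
`V¹_{β/2}(φ)` with coefficients `(A_n) ∈ ℓ¹` satisfying `‖A‖₁ ≤ φ(ω)‖c‖₁²`. -/
theorem spectrogram_mem_shift_invariant (β : ℝ) (hβ : 0 < β) (c : ℤ → ℂ)
    (hc : Summable (fun k : ℤ => ‖c k‖)) (f : ℝ → ℂ)
    (hf : ∀ t : ℝ, f t = ∑' k : ℤ, c k * (Real.exp (-Real.pi * (t - β*k)^2) : ℂ))
    (ω : ℝ) :
    Summable (fun n : ℤ => ‖specCoeff β c ω n‖) ∧
      (∑' n : ℤ, ‖specCoeff β c ω n‖) ≤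
        Real.exp (-Real.pi * ω^2) * (∑' k : ℤ, ‖c k‖)^2 ∧
      ∀ x : ℝ, ((‖gaborTransform f x ω‖^2 : ℝ) : ℂ) =
        ∑' n : ℤ, specCoeff β c ω n *
          (Real.exp (-Real.pi * (x - β/2 * n)^2) : ℝ) := by
  have hc' : Summable fun k : ℤ => ‖‖c k‖‖ := by simpa using hc
  have hcc : Summable (fun p : ℤ×ℤ => ‖c p.1‖ * ‖c p.2‖) :=
    hc.mul_of_nonneg hc (fun _ => norm_nonneg _) (fun _ => norm_nonneg _)
  let e : ℤ×ℤ ≃ ℤ×ℤ :=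
    { toFun := fun q => (q.2, q.1 - q.2)
      invFun := fun p => (p.1 + p.2, p.1)
      left_inv := fun q => by simp
      right_inv := fun p => by simp }
  have hccE : Summable (fun q : ℤ×ℤ => ‖c q.2‖ * ‖c (q.1 - q.2)‖) :=
    (Equiv.summable_iff (f := fun p : ℤ×ℤ => ‖c p.1‖ * ‖c p.2‖) e).mpr hcc
  obtain ⟨hfib, hsums⟩ :=
    (summable_prod_of_nonneg (f := fun q : ℤ×ℤ => ‖c q.2‖ * ‖c (q.1-q.2)‖)
      (fun q => mul_nonneg (norm_nonneg _) (norm_nonneg _))).mp hccE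
  have htsum2 : (∑' q : ℤ×ℤ, ‖c q.2‖ * ‖c (q.1 - q.2)‖) = (∑' k : ℤ, ‖c k‖)^2 := by
    have h1 : (∑' q : ℤ×ℤ, ‖c q.2‖ * ‖c (q.1 - q.2)‖) = ∑' p : ℤ×ℤ, ‖c p.1‖ * ‖c p.2‖ :=
      e.tsum_eq (f := fun p : ℤ×ℤ => ‖c p.1‖ * ‖c p.2‖)
    rw [h1, ← tsum_mul_tsum_of_summable_norm hc' hc', sq]
  set E : ℝ := Real.exp (-Real.pi * ω^2) with hE
  have hterm : ∀ n k : ℤ, ‖c k * starRingEnd ℂ (c (n - k)) *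
      ((1/2 : ℝ) * Real.exp (-(Real.pi * β^2 / 4) * (((n - k : ℤ) : ℝ) - k)^2) : ℝ) *
      Complex.exp (Real.pi * Complex.I * β * ((((n - k : ℤ) : ℝ)) - k) * ω) *
      (Real.exp (-Real.pi * ω^2) : ℝ)‖ ≤ ‖c k‖ * ‖c (n - k)‖ * E := by
    intro n k
    rw [show ((Real.pi : ℂ) * Complex.I * β * ((((n - k : ℤ) : ℝ):ℂ) - (k:ℂ)) * ω)
      = ((Real.pi * β * (((n - k : ℤ) : ℝ) - k) * ω : ℝ) : ℂ) * I from by push_cast; ring]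
    simp only [norm_mul, Complex.norm_real, Real.norm_eq_abs, Complex.norm_conj,
      Complex.norm_exp_ofReal_mul_I, Real.abs_exp, mul_one]
    rw [_root_.abs_of_nonneg (by positivity : (0:ℝ) ≤ (1/2 : ℝ))]
    have hr1 : (1/2 : ℝ) * Real.exp (-(Real.pi * β^2 / 4) * (((n - k : ℤ) : ℝ) - k)^2) ≤ 1 := by
      have h0 : (0:ℝ) ≤ (Real.pi * β^2 / 4) * (((n - k : ℤ) : ℝ) - k)^2 := by positivity
      have := Real.exp_le_one_iff.mpr
        (show -(Real.pi * β^2 / 4) * (((n - k : ℤ) : ℝ) - k)^2 ≤ 0 by linarith)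
      linarith
    calc ‖c k‖ * ‖c (n-k)‖ *
          ((1/2 : ℝ) * Real.exp (-(Real.pi * β^2 / 4) * (((n - k : ℤ) : ℝ) - k)^2)) * E
        ≤ ‖c k‖ * ‖c (n-k)‖ * Real.exp (-Real.pi * ω^2) :=
          mul_le_mul_of_nonneg_right
            (mul_le_of_le_one_right (by positivity) hr1) (Real.exp_pos _).le
      _ = ‖c k‖ * ‖c (n - k)‖ * E := rfl
  have hA_inner : ∀ n : ℤ, Summable (fun k : ℤ => ‖c k * starRingEnd ℂ (c (n - k)) *
      ((1/2 : ℝ) * Real.exp (-(Real.pi * β^2 / 4) * (((n - k : ℤ) : ℝ) - k)^2) : ℝ) *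
      Complex.exp (Real.pi * Complex.I * β * ((((n - k : ℤ) : ℝ)) - k) * ω) *
      (Real.exp (-Real.pi * ω^2) : ℝ)‖) := fun n =>
    Summable.of_nonneg_of_le (fun _ => norm_nonneg _) (hterm n) ((hfib n).mul_right E)
  have hAle : ∀ n : ℤ, ‖specCoeff β c ω n‖ ≤ (∑' k : ℤ, ‖c k‖ * ‖c (n - k)‖) * E := by
    intro n
    rw [specCoeff]
    calc ‖∑' k : ℤ, c k * starRingEnd ℂ (c (n - k)) *
        ((1/2 : ℝ) * Real.exp (-(Real.pi * β^2 / 4) * (((n - k : ℤ) : ℝ) - k)^2) : ℝ) *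
        Complex.exp (Real.pi * Complex.I * β * ((((n - k : ℤ) : ℝ)) - k) * ω) *
        (Real.exp (-Real.pi * ω^2) : ℝ)‖
        ≤ ∑' k : ℤ, ‖c k * starRingEnd ℂ (c (n - k)) *
          ((1/2 : ℝ) * Real.exp (-(Real.pi * β^2 / 4) * (((n - k : ℤ) : ℝ) - k)^2) : ℝ) *
          Complex.exp (Real.pi * Complex.I * β * ((((n - k : ℤ) : ℝ)) - k) * ω) *
          (Real.exp (-Real.pi * ω^2) : ℝ)‖ := norm_tsum_le_tsum_norm (hA_inner n)
      _ ≤ ∑' k : ℤ, ‖c k‖ * ‖c (n - k)‖ * E :=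
          Summable.tsum_le_tsum (hterm n) (hA_inner n) ((hfib n).mul_right E)
      _ = (∑' k : ℤ, ‖c k‖ * ‖c (n - k)‖) * E := tsum_mul_right
  have hAsum : Summable fun n : ℤ => ‖specCoeff β c ω n‖ :=
    Summable.of_nonneg_of_le (fun _ => norm_nonneg _) hAle (hsums.mul_right E)
  refine ⟨hAsum, ?_, ?_⟩
  · calc (∑' n : ℤ, ‖specCoeff β c ω n‖)
        ≤ ∑' n : ℤ, (∑' k : ℤ, ‖c k‖ * ‖c (n - k)‖) * E :=
          Summable.tsum_le_tsum hAle hAsum (hsums.mul_right E)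
      _ = (∑' n : ℤ, ∑' k : ℤ, ‖c k‖ * ‖c (n - k)‖) * E := tsum_mul_right
      _ = (∑' q : ℤ×ℤ, ‖c q.2‖ * ‖c (q.1 - q.2)‖) * E := by
          rw [Summable.tsum_prod' hccE hfib]
      _ = E * (∑' k : ℤ, ‖c k‖)^2 := by rw [htsum2]; ring
  · intro x
    have hu : Summable fun k : ℤ => ‖c k * Gau' β ω x k‖ :=
      Summable.of_nonneg_of_le (fun _ => norm_nonneg _)
        (fun k => by
          rw [norm_mul]
          calc ‖c k‖ * ‖Gau' β ω x k‖ ≤ ‖c k‖ * 1 :=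
                mul_le_mul_of_nonneg_left (norm_Gau'_le_one β ω x k) (norm_nonneg _)
            _ = ‖c k‖ := mul_one _) hc
    have hv : Summable fun j : ℤ => ‖starRingEnd ℂ (c j * Gau' β ω x j)‖ := by
      simpa only [starRingEnd_apply, norm_star] using hu
    have hG := gabor_repr β c hc f hf ω x
    set T : ℤ×ℤ → ℂ :=
      fun p => (c p.1 * Gau' β ω x p.1) * starRingEnd ℂ (c p.2 * Gau' β ω x p.2) with hT
    have hTnorm : ∀ p : ℤ×ℤ, ‖T p‖ ≤ ‖c p.1‖ * ‖c p.2‖ := by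
      intro p
      rw [hT]
      dsimp only
      rw [norm_mul, starRingEnd_apply, norm_star, norm_mul, norm_mul]
      exact mul_le_mul (mul_le_of_le_one_right (norm_nonneg _) (norm_Gau'_le_one β ω x p.1))
        (mul_le_of_le_one_right (norm_nonneg _) (norm_Gau'_le_one β ω x p.2))
        (by positivity) (norm_nonneg _)
    have hTE : Summable fun q : ℤ×ℤ => ‖T (e q)‖ :=
      Summable.of_nonneg_of_le (fun _ => norm_nonneg _) (fun q => hTnorm (e q)) hccE
    have hTEfib : ∀ n : ℤ, Summable fun k : ℤ => T (e (n, k)) := fun n =>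
      Summable.of_norm (Summable.of_nonneg_of_le (fun _ => norm_nonneg _)
        (fun k => hTnorm (e (n, k))) (hfib n))
    have hsq : ((‖gaborTransform f x ω‖^2 : ℝ) : ℂ) =
        gaborTransform f x ω * starRingEnd ℂ (gaborTransform f x ω) := by
      rw [Complex.mul_conj]
      congr 1
      rw [Complex.normSq_eq_norm_sq]
    have hconj : starRingEnd ℂ (∑' k : ℤ, c k * Gau' β ω x k) =
        ∑' j : ℤ, starRingEnd ℂ (c j * Gau' β ω x j) := by
      simp only [starRingEnd_apply]
      exact tsum_star
    calc ((‖gaborTransform f x ω‖^2 : ℝ) : ℂ)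
        = gaborTransform f x ω * starRingEnd ℂ (gaborTransform f x ω) := hsq
      _ = (∑' k : ℤ, c k * Gau' β ω x k) * (∑' j : ℤ, starRingEnd ℂ (c j * Gau' β ω x j)) := by
          rw [hG, hconj]
      _ = ∑' p : ℤ×ℤ, T p := tsum_mul_tsum_of_summable_norm hu hv
      _ = ∑' q : ℤ×ℤ, T (e q) := (e.tsum_eq T).symm
      _ = ∑' n : ℤ, ∑' k : ℤ, T (e (n, k)) := Summable.tsum_prod' (Summable.of_norm hTE) hTEfib
      _ = ∑' n : ℤ, specCoeff β c ω n * (Real.exp (-Real.pi * (x - β/2 * n)^2) : ℝ) := by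
          refine tsum_congr fun n => ?_
          rw [specCoeff, ← tsum_mul_right]
          exact tsum_congr fun k => point_id β ω x c n k
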